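/- Let 𝒯 be a pretriangulated category admitting countable products and countable coproducts. For an object X write ⨁X for the coproduct and ∏X for the product of countably many copies of X, κ_X : ⨁X → ∏X for the canonical morphism, and Δ_X : X → ∏X for the diagonal. Suppose given objects C, P, Q and morphisms d : C → P, u : P → ∏C, e : ⨁C → P, q : P → Q such that u ∘ d = Δ_C, u ∘ e = κ_C, and such that ⨁C →^e P →^q Q → (⨁C)[1] is a distinguished triangle. Then for every object D and every morphism f : D → C with q ∘ d ∘ f = 0, there exists a morphism φ : D → ⨁C with e ∘ φ = d ∘ f, and any such φ satisfies π_n ∘ κ_C ∘ φ = f for every n ∈ ℕ, where π_n : ∏C → C is the n-th projection. -/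

import Mathlib

open CategoryTheory CategoryTheory.Limits CategoryTheory.Pretriangulated

theorem stmt14 {T : Type*} [Category T] [Preadditive T] [HasZeroObject T]
    [HasShift T ℤ] [∀ n : ℤ, (shiftFunctor T n).Additive] [Pretriangulated T]
    [HasCountableProducts T] [HasCountableCoproducts T]
    (C P Q : T)
    (d : C ⟶ P) (u : P ⟶ ∏ᶜ fun _ : ℕ => C) (e : (∐ fun _ : ℕ => C) ⟶ P)
    (q : P ⟶ Q) (w : Q ⟶ (∐ fun _ : ℕ => C)⟦(1 : ℤ)⟧)
    (hud : d ≫ u = Pi.lift fun _ => 𝟙 C)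
    (hue : e ≫ u = Limits.Sigma.desc fun m => Pi.lift fun n => if m = n then 𝟙 C else 0)
    (htri : Triangle.mk e q w ∈ distTriang T)
    (D : T) (f : D ⟶ C) (hf : f ≫ d ≫ q = 0) :
    (∃ φ : D ⟶ ∐ fun _ : ℕ => C, φ ≫ e = f ≫ d) ∧
    (∀ φ : D ⟶ ∐ fun _ : ℕ => C, φ ≫ e = f ≫ d →
      ∀ n : ℕ,
        φ ≫ (Limits.Sigma.desc fun m => Pi.lift fun n' => if m = n' then 𝟙 C else 0) ≫
          Pi.π (fun _ : ℕ => C) n = f) := by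
  constructor
  · obtain ⟨g, hg⟩ := Triangle.coyoneda_exact₂ _ htri (f ≫ d) (by exact (Category.assoc _ _ _).trans hf)
    exact ⟨g, hg.symm⟩
  · intro φ hφ n
    rw [← hue, ← Category.assoc, ← Category.assoc, hφ, Category.assoc, Category.assoc,
      ← Category.assoc d u, hud]
    simp
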